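/- Utility of the continuous exponential mechanism for a single quantile: Given a dataset X = {x_1 < x_2 < ... < x_n} ⊂ (a,b) and quantile q ∈ [0,1], the exponential mechanism with utility u(X,w) = −| |{x ∈ X : x < w}| − ⌊q·n⌋ | and privacy parameter ε outputs, with probability at least 1 − β, a point v such that Gap_X(o, v) ≤ 2·(log ψ − log β)/ε, where o is a true q-quantile and ψ = (b−a)/min_{k ∈ [n+1]}(x_k − x_{k−1}) with x_0 = a, x_{n+1} = b. -/

import Mathlib

open MeasureTheory Real Finset

/-- `Gap X d₁ d₂` is the number of points of `X` in `[min(d₁,d₂), max(d₁,d₂))`. -/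
noncomputable def Gap (X : Finset ℝ) (d₁ d₂ : ℝ) : ℕ :=
  (X.filter (fun x => min d₁ d₂ ≤ x ∧ x < max d₁ d₂)).card

/-- The single-quantile utility function `u(X, w) = −| |{x ∈ X : x < w}| − ⌊q·|X|⌋ |`. -/
noncomputable def quantileUtility (q : ℝ) (X : Finset ℝ) (w : ℝ) : ℝ :=
  -|((X.filter (fun x => x < w)).card : ℝ) - (⌊q * X.card⌋ : ℤ)|

/-- The continuous exponential mechanism for a single quantile: it samples `v ∈ (a,b)`
with density proportional to `exp(ε·u(X,v)/2)`. -/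
noncomputable def contExpMech (ε a b q : ℝ) (X : Finset ℝ) : Measure ℝ :=
  (volume.restrict (Set.Ioo a b)).withDensity
    (fun w => ENNReal.ofReal (Real.exp (ε * quantileUtility q X w / 2) /
      ∫ w' in Set.Ioo a b, Real.exp (ε * quantileUtility q X w' / 2)))

lemma card_filter_lt_add (X : Finset ℝ) {m M : ℝ} (h : m ≤ M) :
    (X.filter (fun y => y < M)).card
      = (X.filter (fun y => y < m)).card + (X.filter (fun y => m ≤ y ∧ y < M)).card := by
  rw [← card_union_of_disjoint]
  · congr 1
    ext y
    simp only [mem_union, mem_filter]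
    constructor
    · rintro ⟨hy, hM⟩
      rcases lt_or_ge y m with h'|h'
      · exact Or.inl ⟨hy, h'⟩
      · exact Or.inr ⟨hy, h', hM⟩
    · rintro (⟨hy,h'⟩|⟨hy,h',hM⟩)
      exacts [⟨hy, lt_of_lt_of_le h' h⟩, ⟨hy, hM⟩]
  · rw [disjoint_left]
    intro y hy hy'
    simp only [mem_filter] at hy hy'
    exact absurd hy'.2.1 (not_le.mpr hy.2)

lemma gap_real (X : Finset ℝ) (d₁ d₂ : ℝ) :
    (Gap X d₁ d₂ : ℝ) = |((X.filter (fun y => y < d₂)).card : ℝ)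
      - ((X.filter (fun y => y < d₁)).card : ℝ)| := by
  have key : ∀ u v : ℝ, u ≤ v → (Gap X u v : ℝ) = |((X.filter (fun y => y < v)).card : ℝ)
      - ((X.filter (fun y => y < u)).card : ℝ)| := by
    intro u v huv
    have h := card_filter_lt_add X huv
    rw [abs_of_nonneg (by simp [h]), Gap, min_eq_left huv, max_eq_right huv]
    push_cast [h]
    ring
  rcases le_total d₁ d₂ with h|h
  · exact key d₁ d₂ h
  · rw [Gap, min_comm, max_comm, ← Gap, key d₂ d₁ h, abs_sub_comm]

/-- Utility of the continuous exponential mechanism for a single quantile: on a dataset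
`X = {x_1 < … < x_n} ⊂ (a,b)` (with `x_0 = a`, `x_{n+1} = b`), with probability at
least `1 − β` the mechanism outputs `v` with
`Gap_X(o, v) ≤ 2·(log ψ − log β)/ε`, where `o` is a true `q`-quantile and
`ψ = (b−a)/min_k (x_k − x_{k−1})`. -/
theorem contExpMech_utility (n : ℕ) (x : Fin (n + 2) → ℝ) (hmono : StrictMono x)
    (a b : ℝ) (ha : x 0 = a) (hb : x (Fin.last (n + 1)) = b)
    (X : Finset ℝ) (hX : X = Finset.image (fun i : Fin n => x i.succ.castSucc) Finset.univ)
    (q : ℝ) (hq : q ∈ Set.Icc (0 : ℝ) 1)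
    (o : ℝ) (ho : o ∈ Set.Ioo a b)
    (htrue : ((X.filter (fun y => y < o)).card : ℤ) = ⌊q * n⌋)
    (ε β : ℝ) (hε : 0 < ε) (hβ : β ∈ Set.Ioo (0 : ℝ) 1) :
    ENNReal.ofReal (1 - β) ≤
      contExpMech ε a b q X
        {v | (Gap X o v : ℝ) ≤ 2 * (Real.log ((b - a) /
            (Finset.univ.inf' Finset.univ_nonempty
              (fun k : Fin (n + 1) => x k.succ - x k.castSucc))) - Real.log β) / ε} := by
  obtain ⟨hao, hob⟩ := ho
  obtain ⟨hβ0, hβ1⟩ := hβ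
  have hab : a < b := hao.trans hob
  -- notation
  set m : ℝ := Finset.univ.inf' Finset.univ_nonempty
      (fun k : Fin (n + 1) => x k.succ - x k.castSucc) with hm
  set t : ℝ := 2 * (Real.log ((b - a) / m) - Real.log β) / ε with ht
  set cR : ℝ → ℝ := fun w => ((X.filter (fun y => y < w)).card : ℝ) with hcR
  set F : ℝ := ((⌊q * X.card⌋ : ℤ) : ℝ) with hFdef
  set g : ℝ → ℝ := fun w => Real.exp (ε * quantileUtility q X w / 2) with hg
  set Z : ℝ := ∫ w' in Set.Ioo a b, g w' with hZ
  have hcard : X.card = n := by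
    rw [hX, Finset.card_image_of_injective _ (fun i j hij => by
      have := hmono.injective hij
      exact Fin.succ_injective _ (Fin.castSucc_injective _ this))]
    simp
  have hgval : ∀ w, g w = Real.exp (ε * (-|cR w - F|) / 2) := by
    intro w; simp [hg, quantileUtility, hcR, hFdef]
  have hF : F = cR o := by
    simp only [hFdef, hcR, hcard]
    exact_mod_cast congrArg (fun z : ℤ => (z : ℝ)) htrue.symm
  have cmono : Monotone cR := by
    intro u v huv
    have hsub : (X.filter (fun y => y < u)) ⊆ (X.filter (fun y => y < v)) :=
      Finset.monotone_filter_right X (fun y _ (hy : y < u) => lt_of_lt_of_le hy huv)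
    simp only [hcR]
    exact_mod_cast Finset.card_le_card hsub
  have cmeas : Measurable cR := cmono.measurable
  have gmeas : Measurable g := by
    have : Measurable fun w => ε * (-|cR w - F|) / 2 :=
      (((cmeas.sub measurable_const).abs.neg).const_mul ε).div_const 2
    simpa [funext hgval] using this.exp
  have hgpos : ∀ w, 0 < g w := fun w => by rw [hgval]; exact Real.exp_pos _
  have hgle1 : ∀ w, g w ≤ 1 := by
    intro w
    rw [hgval]
    apply Real.exp_le_one_iff.mpr
    have : (0:ℝ) ≤ |cR w - F| := abs_nonneg _
    have := mul_nonneg hε.le this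
    nlinarith
  haveI : IsFiniteMeasure (volume.restrict (Set.Ioo a b)) :=
    ⟨by rw [Measure.restrict_apply_univ]; exact measure_Ioo_lt_top⟩
  have gInt : Integrable g (volume.restrict (Set.Ioo a b)) := by
    refine Integrable.mono' (integrable_const 1) gmeas.aestronglyMeasurable ?_
    filter_upwards with w
    rw [Real.norm_eq_abs, abs_of_pos (hgpos w)]
    exact hgle1 w
  -- the index k with x k.castSucc < o ≤ x k.succ
  have hK : ∃ k : Fin (n+1), x k.castSucc < o ∧ o ≤ x k.succ := by
    classical
    set S : Finset (Fin (n+2)) := Finset.univ.filter (fun j => x j < o) with hS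
    have hSne : S.Nonempty := ⟨0, by simp [hS, ha, hao]⟩
    set K := S.max' hSne with hKdef
    have hKmem : K ∈ S := S.max'_mem hSne
    have hKlt : x K < o := by
      have := Finset.mem_filter.mp hKmem
      exact this.2
    have hKval : K.val < n + 1 := by
      rcases lt_or_eq_of_le (Nat.lt_succ_iff.mp K.isLt) with h | h
      · exact h
      · exfalso
        have hKl : K = Fin.last (n+1) := Fin.ext h
        rw [hKl, hb] at hKlt
        exact absurd hKlt (not_lt.mpr hob.le)
    refine ⟨⟨K.val, hKval⟩, ?_, ?_⟩
    · have hcast : (Fin.castSucc ⟨K.val, hKval⟩ : Fin (n+2)) = K := by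
        ext; simp
      rw [hcast]; exact hKlt
    · by_contra h
      push_neg at h
      have hmem : (Fin.succ ⟨K.val, hKval⟩ : Fin (n+2)) ∈ S := by
        simp only [hS, Finset.mem_filter, Finset.mem_univ, true_and]
        exact h
      have hle := Finset.le_max' S _ hmem
      rw [← hKdef] at hle
      have : K.val + 1 ≤ K.val := by simpa [Fin.le_def] using hle
      omega
  obtain ⟨k, hk1, hk2⟩ := hK
  -- count is constant on the k-th interval
  have hconst : ∀ v ∈ Set.Ioo (x k.castSucc) (x k.succ), cR v = cR o := by
    intro v hv
    have hfil : X.filter (fun y => y < v) = X.filter (fun y => y < o) := by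
      ext y
      simp only [Finset.mem_filter, and_congr_right_iff]
      intro hy
      rw [hX] at hy
      obtain ⟨i, _, rfl⟩ := Finset.mem_image.mp hy
      set i2 : Fin (n+2) := Fin.castSucc (Fin.succ i) with hi2
      rcases le_or_gt i2 k.castSucc with hik | hik
      · have h1 : x i2 ≤ x k.castSucc := hmono.monotone hik
        constructor <;> intro _
        · exact lt_of_le_of_lt h1 hk1
        · exact lt_of_le_of_lt h1 hv.1
      · have hik' : (Fin.succ k : Fin (n+2)) ≤ i2 := by
          have hlt : k.castSucc.val + 1 ≤ i2.val := hik
          simp only [Fin.le_def, Fin.val_succ]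
          simpa using hlt
        have h1' : x k.succ ≤ x i2 := hmono.monotone hik' 
        constructor <;> intro h'
        · exact absurd h' (not_lt.mpr (hv.2.le.trans h1'))
        · exact absurd h' (not_lt.mpr (hk2.trans h1'))
    simp only [hcR, hfil]
  have hsub : Set.Ioo (x k.castSucc) (x k.succ) ⊆ Set.Ioo a b := by
    apply Set.Ioo_subset_Ioo
    · rw [← ha]; exact hmono.monotone (Fin.zero_le _)
    · rw [← hb]; exact hmono.monotone (Fin.le_last _)
  have hkpos : x k.castSucc < x k.succ := hmono (Fin.castSucc_lt_succ (i := k))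
  have hmle : m ≤ x k.succ - x k.castSucc := Finset.inf'_le _ (Finset.mem_univ k)
  have hmpos : 0 < m := by
    rw [hm, Finset.lt_inf'_iff]
    intro j _
    exact sub_pos.mpr (hmono (Fin.castSucc_lt_succ (i := j)))
  have hZge : x k.succ - x k.castSucc ≤ Z := by
    have h1 : ∫ w' in Set.Ioo (x k.castSucc) (x k.succ), g w' = x k.succ - x k.castSucc := by
      rw [setIntegral_congr_fun measurableSet_Ioo (g := fun _ => (1:ℝ))
        (fun v hv => by rw [hgval, hconst v hv, ← hF]; simp)]
      simp [Real.volume_Ioo, ENNReal.toReal_ofReal (sub_nonneg.mpr hkpos.le), hkpos.le]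
    rw [hZ, ← h1]
    exact setIntegral_mono_set gInt
      (Filter.Eventually.of_forall fun w => (hgpos w).le)
      (HasSubset.Subset.eventuallyLE hsub)
  have hZpos : 0 < Z := lt_of_lt_of_le (lt_of_lt_of_le hmpos hmle) hZge
  have hZle : Z ≤ b - a := by
    calc Z ≤ ∫ _ in Set.Ioo a b, (1:ℝ) :=
          setIntegral_mono_on gInt (integrable_const 1) measurableSet_Ioo
            (fun w _ => hgle1 w)
      _ = b - a := by simp [Real.volume_Ioo, ENNReal.toReal_ofReal (sub_nonneg.mpr hab.le), hab.le]
  -- the mechanism is a probability measure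
  set μ : Measure ℝ := contExpMech ε a b q X with hμ
  have hμs : ∀ s : Set ℝ, MeasurableSet s →
      μ s = ∫⁻ w in s ∩ Set.Ioo a b, ENNReal.ofReal (g w / Z) ∂volume := by
    intro s hs
    rw [hμ, contExpMech, withDensity_apply _ hs, Measure.restrict_restrict hs]
  have htotal : μ Set.univ = 1 := by
    rw [hμs Set.univ MeasurableSet.univ, Set.univ_inter,
      ← ofReal_integral_eq_lintegral_ofReal (gInt.div_const Z)
        (Filter.Eventually.of_forall fun w => div_nonneg (hgpos w).le hZpos.le)]
    rw [integral_div, ← hZ, div_self hZpos.ne']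
    simp
  -- the good set
  set G : Set ℝ := {v | (Gap X o v : ℝ) ≤ t} with hG
  have hGeq : G = {v | |cR v - F| ≤ t} := by
    ext v
    simp only [hG, Set.mem_setOf_eq, gap_real, hF, hcR]
  have hGmeas : MeasurableSet G := by
    rw [hGeq]
    exact measurableSet_le ((cmeas.sub measurable_const).abs) measurable_const
  -- bound on the bad set
  have hexp : Real.exp (-(ε * t) / 2) = β * m / (b - a) := by
    have hba : (0:ℝ) < (b - a) / m := div_pos (sub_pos.mpr hab) hmpos
    have heq : -(ε * t) / 2 = Real.log β - Real.log ((b-a)/m) := by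
      rw [ht]; field_simp; ring
    rw [heq, Real.exp_sub, Real.exp_log hβ0, Real.exp_log hba]
    field_simp
  have hbad : μ Gᶜ ≤ ENNReal.ofReal β := by
    rw [hμs Gᶜ hGmeas.compl]
    have hle : ∀ w ∈ Gᶜ ∩ Set.Ioo a b,
        ENNReal.ofReal (g w / Z) ≤ ENNReal.ofReal (Real.exp (-(ε*t)/2) / Z) := by
      intro w hw
      have hwG : t < |cR w - F| := by
        have := hw.1
        rw [hGeq] at this
        simpa using this
      apply ENNReal.ofReal_le_ofReal
      apply div_le_div_of_nonneg_right ?_ hZpos.le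
      · rw [hgval]
        apply Real.exp_le_exp.mpr
        nlinarith [hwG, hε]
    calc ∫⁻ w in Gᶜ ∩ Set.Ioo a b, ENNReal.ofReal (g w / Z) ∂volume
        ≤ ∫⁻ _ in Gᶜ ∩ Set.Ioo a b, ENNReal.ofReal (Real.exp (-(ε*t)/2) / Z) ∂volume :=
          setLIntegral_mono measurable_const hle
      _ = ENNReal.ofReal (Real.exp (-(ε*t)/2) / Z) * volume (Gᶜ ∩ Set.Ioo a b) := by
          rw [setLIntegral_const]
      _ ≤ ENNReal.ofReal (Real.exp (-(ε*t)/2) / Z) * ENNReal.ofReal (b - a) := by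
          apply mul_le_mul_right
          calc volume (Gᶜ ∩ Set.Ioo a b) ≤ volume (Set.Ioo a b) :=
                measure_mono Set.inter_subset_right
            _ = ENNReal.ofReal (b - a) := Real.volume_Ioo
      _ = ENNReal.ofReal (Real.exp (-(ε*t)/2) / Z * (b - a)) := by
          rw [← ENNReal.ofReal_mul (by positivity)]
      _ ≤ ENNReal.ofReal β := by
          apply ENNReal.ofReal_le_ofReal
          rw [hexp]
          have hba0 : b - a ≠ 0 := sub_ne_zero.mpr hab.ne'
          have heq2 : β * m / (b - a) / Z * (b - a) = β * (m / Z) := by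
            field_simp
          rw [heq2]
          have hmZ : m / Z ≤ 1 := (div_le_one hZpos).mpr (hmle.trans hZge)
          calc β * (m / Z) ≤ β * 1 := mul_le_mul_of_nonneg_left hmZ hβ0.le
            _ = β := mul_one β
  -- conclude
  have hsum : μ G + μ Gᶜ = 1 := by rw [measure_add_measure_compl hGmeas, htotal]
  have hGc_fin : μ Gᶜ ≤ 1 := by
    rw [← htotal]; exact measure_mono (Set.subset_univ _)
  have hGval : μ G = 1 - μ Gᶜ := by
    rw [← hsum]
    exact (ENNReal.add_sub_cancel_right (lt_of_le_of_lt hGc_fin ENNReal.one_lt_top).ne).symm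
  calc ENNReal.ofReal (1 - β) = ENNReal.ofReal 1 - ENNReal.ofReal β :=
        ENNReal.ofReal_sub 1 hβ0.le
    _ ≤ 1 - μ Gᶜ := by
        rw [ENNReal.ofReal_one]
        exact tsub_le_tsub_left hbad 1
    _ = μ G := hGval.symm
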